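/- Let g ∈ GL(4, ℤ) be an element of prime order p ≥ 3 that fixes a nonzero vector. Then p = 3, and the characteristic polynomial of g equals (x − 1)²·(x² + x + 1); in particular the fixed subspace of g in ℚ⁴ has dimension 2. -/

import Mathlib

open Polynomial

lemma aux_even {V : Type*} [AddCommGroup V] [Module ℚ V] [FiniteDimensional ℚ V]
    (J : V →ₗ[ℚ] V) (h : J * J + J + 1 = 0) : Even (Module.finrank ℚ V) := by
  have h3 : (-3 : V →ₗ[ℚ] V) = (-3 : ℚ) • (LinearMap.id : V →ₗ[ℚ] V) := by
    rw [neg_smul, ← neg_inj]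
    norm_num
    ext y
    show (3 : V →ₗ[ℚ] V) y = (3:ℚ) • y
    rw [show (3 : V →ₗ[ℚ] V) = 1 + 1 + 1 by norm_num]
    simp
    module
  have h2 : (2 * J + 1) * (2 * J + 1) = (-3 : V →ₗ[ℚ] V) := by
    calc (2*J+1)*(2*J+1) = 4*(J*J + J + 1) - 3 := by
          noncomm_ring; simp [nsmul_eq_mul, zsmul_eq_mul]; norm_num
    _ = -3 := by rw [h]; noncomm_ring
  have hd : LinearMap.det (2*J+1) ^ 2 = (-3:ℚ) ^ Module.finrank ℚ V := by
    have h4 := congrArg LinearMap.det h2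
    rw [h3, LinearMap.det_smul, LinearMap.det_id, mul_one] at h4
    rw [← h4, sq]
    exact (map_mul LinearMap.det _ _).symm
  by_contra hodd
  have hneg : (-3:ℚ) ^ Module.finrank ℚ V < 0 :=
    Odd.pow_neg (Nat.not_even_iff_odd.1 hodd) (by norm_num)
  have := sq_nonneg (LinearMap.det (2*J+1))
  rw [hd] at this
  linarith


/-- If `g ∈ GL(4, ℤ)` has odd prime order `p` and fixes a nonzero vector, then
`p = 3`, the characteristic polynomial of `g` is `(X − 1)²·(X² + X + 1)`, and
the fixed subspace of `g` in `ℚ⁴` has dimension 2. -/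
theorem stmt_17 (p : ℕ) (hp : p.Prime) (hp3 : 3 ≤ p)
    (g : GL (Fin 4) ℤ) (hord : orderOf g = p)
    (hfix : ∃ v : Fin 4 → ℤ, v ≠ 0 ∧
      (g : Matrix (Fin 4) (Fin 4) ℤ).mulVec v = v) :
    p = 3 ∧
    (g : Matrix (Fin 4) (Fin 4) ℤ).charpoly = (X - 1) ^ 2 * (X ^ 2 + X + 1) ∧
    Module.finrank ℚ
      (LinearMap.ker
        (Matrix.toLin' ((g : Matrix (Fin 4) (Fin 4) ℤ).map ((↑) : ℤ → ℚ)) -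
          LinearMap.id)) = 2 := by
  haveI : Fact p.Prime := ⟨hp⟩
  obtain ⟨v, hv0, hvfix⟩ := hfix
  set A : Matrix (Fin 4) (Fin 4) ℤ := (g : Matrix (Fin 4) (Fin 4) ℤ) with hA
  -- g ≠ 1
  have hg1 : g ≠ 1 := by
    intro h; rw [h, orderOf_one] at hord; omega
  have hgp : g ^ p = 1 := by rw [← hord]; exact pow_orderOf_eq_one g
  have hAp : A ^ p = 1 := by
    have := congrArg (Units.val) hgp
    rwa [Units.val_pow_eq_pow_val, Units.val_one] at this
  -- the rational matrix
  set M : Matrix (Fin 4) (Fin 4) ℚ := A.map ((↑) : ℤ → ℚ) with hM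
  have hMeq : M = (Int.castRingHom ℚ).mapMatrix A := rfl
  have hMp : M ^ p = 1 := by
    rw [hMeq, ← map_pow, hAp, map_one]
  have hMne1 : M ≠ 1 := by
    intro h
    apply hg1
    have : A = 1 := by
      ext i j
      have := congrFun (congrFun h i) j
      simp only [hM, Matrix.map_apply] at this
      by_cases hij : i = j <;>
        simp_all [Matrix.one_apply]
    exact Units.ext this
  -- rational fixed vector
  set v' : Fin 4 → ℚ := fun i => ((v i : ℚ)) with hv'
  have hv'0 : v' ≠ 0 := by
    intro h
    apply hv0
    funext i
    have := congrFun h i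
    simpa [hv'] using this
  have hMv' : M.mulVec v' = v' := by
    funext i
    have := (Int.castRingHom ℚ).map_mulVec A v i
    rw [hvfix] at this
    simpa [hM, hv', Function.comp_def] using this.symm
  -- characteristic polynomial over ℚ
  set c : ℚ[X] := M.charpoly with hc
  have hcdeg : c.natDegree = 4 := by
    simp [hc, Matrix.charpoly_natDegree_eq_dim]
  have hcmonic : c.Monic := M.charpoly_monic
  -- minpoly
  have hint : IsIntegral ℚ M := IsIntegral.of_finite ℚ M
  set m : ℚ[X] := minpoly ℚ M with hm
  have hm_dvd_c : m ∣ c := minpoly.dvd ℚ M (M.aeval_self_charpoly)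
  have hm_dvd : m ∣ X ^ p - 1 := by
    apply minpoly.dvd
    rw [map_sub, map_pow, aeval_X, map_one, hMp, sub_self]
  have hcycl : (X ^ p - 1 : ℚ[X]) = cyclotomic p ℚ * (X - 1) :=
    (cyclotomic_prime_mul_X_sub_one ℚ p).symm
  have hΦirr : Irreducible (cyclotomic p ℚ) := cyclotomic.irreducible_rat hp.pos
  -- Φ_p divides m
  have hΦ_dvd_m : cyclotomic p ℚ ∣ m := by
    by_contra hnd
    have hcop : IsCoprime (cyclotomic p ℚ) m := hΦirr.coprime_iff_not_dvd.2 hnd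
    have : m ∣ (X - 1 : ℚ[X]) := by
      have h1 : m ∣ cyclotomic p ℚ * (X - 1) := hcycl ▸ hm_dvd
      exact hcop.symm.dvd_of_dvd_mul_left h1
    obtain ⟨q, hq⟩ := this
    have hM1 : M = 1 := by
      have h0 : aeval M (X - 1 : ℚ[X]) = 0 := by
        rw [hq, map_mul, minpoly.aeval, zero_mul]
      rw [map_sub, aeval_X, map_one, sub_eq_zero] at h0
      exact h0
    exact hMne1 hM1
  have hΦ_dvd_c : cyclotomic p ℚ ∣ c := hΦ_dvd_m.trans hm_dvd_c
  -- (X - 1) divides c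
  have hdet1M : (1 - M).det = 0 := by
    rw [← Matrix.exists_mulVec_eq_zero_iff]
    exact ⟨v', hv'0, by rw [Matrix.sub_mulVec, Matrix.one_mulVec, hMv', sub_self]⟩
  have hXC : (X - 1 : ℚ[X]) = X - C 1 := by rw [map_one]
  have hX1ne : (X - 1 : ℚ[X]) ≠ 0 := by rw [hXC]; exact X_sub_C_ne_zero 1
  have hX1deg : (X - 1 : ℚ[X]).natDegree = 1 := by rw [hXC, natDegree_X_sub_C]
  have heval1 : c.eval 1 = 0 := by
    have h := eval_det (Matrix.charmatrix M) (1 : ℚ)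
    rw [show (Matrix.charmatrix M).det = c from rfl] at h
    rw [h, Matrix.matPolyEquiv_charmatrix]
    rw [eval_sub, eval_X, eval_C, map_one]
    exact hdet1M
  have hX1_dvd_c : (X - 1 : ℚ[X]) ∣ c := by
    simpa using (dvd_iff_isRoot (p := c) (a := (1:ℚ))).2 heval1
  -- coprimality and p = 3
  have hΦdeg : (cyclotomic p ℚ).natDegree = p - 1 := by
    rw [natDegree_cyclotomic, Nat.totient_prime hp]
  have hcopXΦ : IsCoprime (X - 1 : ℚ[X]) (cyclotomic p ℚ) := by
    apply (hΦirr.coprime_iff_not_dvd.2 ?_).symm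
    intro hdvd
    have := natDegree_le_of_dvd hdvd hX1ne
    rw [hΦdeg, hX1deg] at this
    omega
  have hprod_dvd : (X - 1 : ℚ[X]) * cyclotomic p ℚ ∣ c := hcopXΦ.mul_dvd hX1_dvd_c hΦ_dvd_c
  have hp4 : p ≤ 4 := by
    have := natDegree_le_of_dvd hprod_dvd (hcmonic.ne_zero)
    rw [natDegree_mul hX1ne (cyclotomic_ne_zero p ℚ), hΦdeg, hcdeg, hX1deg] at this
    omega
  have hp_eq : p = 3 := by
    interval_cases p
    · rfl
    · exact absurd hp (by norm_num)
  subst hp_eq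
  have hA3 : A ^ 3 = 1 := hAp
  have hM3 : M ^ 3 = 1 := hMp
  -- the cyclotomic polynomial at 3
  have hPhi3 : cyclotomic 3 ℚ = X ^ 2 + X + 1 := by
    rw [cyclotomic_prime]
    rw [Finset.sum_range_succ, Finset.sum_range_succ, Finset.sum_range_succ,
      Finset.sum_range_zero]
    ring
  -- the linear factor
  obtain ⟨l, hl⟩ := hprod_dvd
  have hlne : l ≠ 0 := by
    rintro rfl
    rw [mul_zero] at hl
    exact hcmonic.ne_zero hl
  have hprodmonic : ((X - 1 : ℚ[X]) * cyclotomic 3 ℚ).Monic := by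
    rw [hXC]
    exact (monic_X_sub_C 1).mul (cyclotomic.monic 3 ℚ)
  have hlmonic : l.Monic := hprodmonic.of_mul_monic_left (hl ▸ hcmonic)
  have hldeg : l.natDegree = 1 := by
    have h4 := hcdeg
    rw [hl, natDegree_mul (mul_ne_zero hX1ne (cyclotomic_ne_zero 3 ℚ)) hlne,
      natDegree_mul hX1ne (cyclotomic_ne_zero 3 ℚ), hX1deg, hΦdeg] at h4
    omega
  have hleq : l = X + C (l.coeff 0) := hlmonic.eq_X_add_C hldeg
  -- determinant is 1
  have hdetA3 : A.det ^ 3 = 1 := by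
    rw [← Matrix.det_pow, hA3, Matrix.det_one]
  have hdetA : A.det = 1 := by
    have hu : IsUnit A.det := IsUnit.of_mul_eq_one (A.det ^ 2) (by
      rw [← pow_succ']; exact hdetA3)
    rcases Int.isUnit_iff.1 hu with h | h
    · exact h
    · rw [h] at hdetA3; norm_num at hdetA3
  have hdetM : M.det = 1 := by
    rw [hMeq, ← RingHom.map_det, hdetA]
    norm_num
  have hc0 : c.coeff 0 = 1 := by
    have h := Matrix.det_eq_sign_charpoly_coeff M
    rw [hdetM] at h
    simp [Fintype.card_fin] at h
    linarith
  have hcoeffl : l.coeff 0 = -1 := by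
    have h0 : c.coeff 0 = -(l.coeff 0) := by
      rw [coeff_zero_eq_eval_zero, hl, hPhi3, eval_mul, eval_mul]
      rw [show l = X + C (l.coeff 0) from hleq]
      simp
    rw [hc0] at h0
    linarith
  -- the characteristic polynomial over ℚ
  have hcfinal : c = (X - 1) ^ 2 * (X ^ 2 + X + 1) := by
    rw [hl, hPhi3, hleq, hcoeffl, map_neg, map_one]
    ring
  -- conclusion over ℤ
  have hcharZ : A.charpoly = (X - 1) ^ 2 * (X ^ 2 + X + 1) := by
    apply Polynomial.map_injective (Int.castRingHom ℚ) Int.cast_injective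
    have hmap : A.charpoly.map (Int.castRingHom ℚ) = c := by
      rw [hc]
      exact (Matrix.charpoly_map A (Int.castRingHom ℚ)).symm
    rw [hmap, hcfinal]
    simp [Polynomial.map_mul, Polynomial.map_pow, Polynomial.map_sub, Polynomial.map_add]
  refine ⟨rfl, hcharZ, ?_⟩
  -- Part C: dimension of the fixed space
  obtain ⟨T, hT⟩ : ∃ T', T' = Matrix.toLin' M := ⟨_, rfl⟩
  rw [← hT]
  have hid : T - LinearMap.id = T - 1 := rfl
  rw [hid]
  have hT3 : T * T * T = 1 := by
    have h1 : T * T * T = Matrix.toLin' (M * M * M) := by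
      rw [Matrix.toLin'_mul, Matrix.toLin'_mul, hT]
      rfl
    have h2 : M * M * M = 1 := by
      rw [← hM3, pow_succ, pow_succ, pow_one]
    rw [h1, h2, Matrix.toLin'_one]
    rfl
  have hFG : (T - 1) * (T * T + T + 1) = 0 := by
    calc (T - 1) * (T * T + T + 1) = T * T * T - 1 := by
          simp only [sub_mul, mul_sub, add_mul, mul_add, mul_one, one_mul, mul_assoc]
          abel
    _ = 0 := by rw [hT3]; exact sub_self 1
  have hGF : (T * T + T + 1) * (T - 1) = 0 := by
    calc (T * T + T + 1) * (T - 1) = T * T * T - 1 := by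
          simp only [sub_mul, mul_sub, add_mul, mul_add, mul_one, one_mul, mul_assoc]
          abel
    _ = 0 := by rw [hT3]; exact sub_self 1
  -- kernels
  have hinf : LinearMap.ker (T - 1) ⊓ LinearMap.ker (T * T + T + 1) = ⊥ := by
    rw [Submodule.eq_bot_iff]
    intro x hx
    obtain ⟨hxF, hxG⟩ := Submodule.mem_inf.1 hx
    rw [LinearMap.mem_ker] at hxF hxG
    have h1 : T x = x := by
      simpa [sub_eq_zero] using hxF
    have h2 : T (T x) + T x + x = 0 := by
      simpa [Module.End.mul_apply] using hxG
    rw [h1, h1] at h2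
    have h3 : (3 : ℚ) • x = 0 := by
      rw [← h2]; module
    simpa using smul_eq_zero.1 h3
  have hrangeF : LinearMap.range (T - 1) ≤ LinearMap.ker (T * T + T + 1) := by
    rintro _ ⟨y, rfl⟩
    rw [LinearMap.mem_ker, ← Module.End.mul_apply, hGF]
    rfl
  have hrangeG : LinearMap.range (T * T + T + 1) ≤ LinearMap.ker (T - 1) := by
    rintro _ ⟨y, rfl⟩
    rw [LinearMap.mem_ker, ← Module.End.mul_apply, hFG]
    rfl
  -- invariance of ker (T² + T + 1) under T
  have hinv : ∀ x ∈ LinearMap.ker (T * T + T + 1), T x ∈ LinearMap.ker (T * T + T + 1) := by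
    intro x hx
    rw [LinearMap.mem_ker] at hx ⊢
    have hcomm : (T * T + T + 1) * T = T * (T * T + T + 1) := by
      simp only [add_mul, mul_add, mul_one, one_mul, mul_assoc]
    calc (T * T + T + 1) (T x) = ((T * T + T + 1) * T) x := rfl
    _ = (T * (T * T + T + 1)) x := by rw [hcomm]
    _ = T ((T * T + T + 1) x) := rfl
    _ = 0 := by rw [hx]; exact map_zero T
  have hJ : T.restrict hinv * T.restrict hinv + T.restrict hinv + 1 = 0 := by
    apply LinearMap.ext
    rintro ⟨x, hx⟩
    rw [LinearMap.mem_ker] at hx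
    simp only [Module.End.mul_apply, LinearMap.add_apply, Module.End.one_apply] at hx
    apply Subtype.ext
    simp only [LinearMap.add_apply, Module.End.mul_apply, Module.End.one_apply,
      LinearMap.zero_apply, LinearMap.restrict_apply, Submodule.coe_add,
      ZeroMemClass.coe_zero]
    exact hx
  have heven : Even (Module.finrank ℚ (LinearMap.ker (T * T + T + 1))) :=
    aux_even _ hJ
  -- v' is in the kernel of T - 1
  have hv'F : v' ∈ LinearMap.ker (T - 1) := by
    rw [LinearMap.mem_ker]
    have h1 : T v' = v' := by rw [hT, Matrix.toLin'_apply, hMv']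
    simp [h1]
  -- dimension bookkeeping
  have hrnF := LinearMap.finrank_range_add_finrank_ker (T - 1)
  have hrnG := LinearMap.finrank_range_add_finrank_ker (T * T + T + 1)
  have hdim4 : Module.finrank ℚ (Fin 4 → ℚ) = 4 := by
    simp [Module.finrank_pi]
  rw [hdim4] at hrnF hrnG
  have hle1 : Module.finrank ℚ (LinearMap.range (T * T + T + 1)) ≤
      Module.finrank ℚ (LinearMap.ker (T - 1)) := Submodule.finrank_mono hrangeG
  have hsum : Module.finrank ℚ (LinearMap.ker (T - 1)) +
      Module.finrank ℚ (LinearMap.ker (T * T + T + 1)) ≤ 4 := by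
    have h := Submodule.finrank_sup_add_finrank_inf_eq
      (LinearMap.ker (T - 1)) (LinearMap.ker (T * T + T + 1))
    rw [hinf, finrank_bot] at h
    have h2 : Module.finrank ℚ
        ↥(LinearMap.ker (T - 1) ⊔ LinearMap.ker (T * T + T + 1)) ≤ 4 := by
      have := Submodule.finrank_le (LinearMap.ker (T - 1) ⊔ LinearMap.ker (T * T + T + 1))
      rwa [hdim4] at this
    omega
  have hkerFpos : Module.finrank ℚ (LinearMap.ker (T - 1)) ≠ 0 := by
    intro h0
    rw [Submodule.finrank_eq_zero] at h0
    rw [h0] at hv'F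
    exact hv'0 (by simpa using hv'F)
  have hkerGpos : Module.finrank ℚ (LinearMap.ker (T * T + T + 1)) ≠ 0 := by
    intro h0
    rw [Submodule.finrank_eq_zero] at h0
    have hF0 : LinearMap.range (T - 1) = ⊥ := le_bot_iff.1 (h0 ▸ hrangeF)
    rw [LinearMap.range_eq_bot] at hF0
    apply hMne1
    have hTid : T = 1 := by
      have := sub_eq_zero.1 hF0
      exact this
    have h5 : Matrix.toLin' M = Matrix.toLin' (1 : Matrix (Fin 4) (Fin 4) ℚ) := by
      rw [← hT, hTid, Matrix.toLin'_one]
      rfl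
    exact Matrix.toLin'.injective h5
  obtain ⟨k, hk⟩ := heven
  omega
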